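/- arXiv:1402.0801 — 6 statements merged into one kernel-verified Lean document; each statement's English description precedes it below -/
import Mathlib

section
/- The group presented by generators y_1, ..., y_8 with relations y_1y_3y_4 = y_2y_3y_4 = y_1y_2y_5 = y_1y_2y_6 = y_1y_2y_7 = y_1y_2y_8 = y_5y_6y_7y_8 = y_3y_5y_6 = y_4y_5y_6 = y_3y_4y_7y_8 = 1 is the trivial group. -/
open FreeGroup in
/-- Relations for the filling `V` (generators `y_1,…,y_8` are indexed `0,…,7`). -/
def VRels : Set (FreeGroup (Fin 8)) :=
  {of 0 * of 2 * of 3, of 1 * of 2 * of 3,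
   of 0 * of 1 * of 4, of 0 * of 1 * of 5, of 0 * of 1 * of 6, of 0 * of 1 * of 7,
   of 4 * of 5 * of 6 * of 7, of 2 * of 4 * of 5, of 3 * of 4 * of 5,
   of 2 * of 3 * of 6 * of 7}

/-- The group `⟨y_1,…,y_8 | y_1y_3y_4 = y_2y_3y_4 = y_1y_2y_5 = y_1y_2y_6 = y_1y_2y_7
    = y_1y_2y_8 = y_5y_6y_7y_8 = y_3y_5y_6 = y_4y_5y_6 = y_3y_4y_7y_8 = 1⟩` is trivial. -/
theorem stmt2 : ∀ x : PresentedGroup VRels, x = 1 := by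
  have key : ∀ r ∈ VRels, (QuotientGroup.mk r : PresentedGroup VRels) = 1 := fun r hr =>
    (QuotientGroup.eq_one_iff r).2 (Subgroup.subset_normalClosure hr)
  set a : Fin 8 → PresentedGroup VRels := PresentedGroup.of with ha
  have r1 : a 0 * a 2 * a 3 = 1 := key _ (Set.mem_insert _ _)
  have r2 : a 1 * a 2 * a 3 = 1 := key _ (Set.mem_insert_of_mem _ (Set.mem_insert _ _))
  have r3 : a 0 * a 1 * a 4 = 1 := key _ (Set.mem_insert_of_mem _ (Set.mem_insert_of_mem _ (Set.mem_insert _ _)))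
  have r4 : a 0 * a 1 * a 5 = 1 := key _ (Set.mem_insert_of_mem _ (Set.mem_insert_of_mem _ (Set.mem_insert_of_mem _ (Set.mem_insert _ _))))
  have r5 : a 0 * a 1 * a 6 = 1 := key _ (Set.mem_insert_of_mem _ (Set.mem_insert_of_mem _ (Set.mem_insert_of_mem _ (Set.mem_insert_of_mem _ (Set.mem_insert _ _)))))
  have r6 : a 0 * a 1 * a 7 = 1 := key _ (Set.mem_insert_of_mem _ (Set.mem_insert_of_mem _ (Set.mem_insert_of_mem _ (Set.mem_insert_of_mem _ (Set.mem_insert_of_mem _ (Set.mem_insert _ _))))))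
  have r7 : a 4 * a 5 * a 6 * a 7 = 1 := key _ (Set.mem_insert_of_mem _ (Set.mem_insert_of_mem _ (Set.mem_insert_of_mem _ (Set.mem_insert_of_mem _ (Set.mem_insert_of_mem _ (Set.mem_insert_of_mem _ (Set.mem_insert _ _)))))))
  have r8 : a 2 * a 4 * a 5 = 1 := key _ (Set.mem_insert_of_mem _ (Set.mem_insert_of_mem _ (Set.mem_insert_of_mem _ (Set.mem_insert_of_mem _ (Set.mem_insert_of_mem _ (Set.mem_insert_of_mem _ (Set.mem_insert_of_mem _ (Set.mem_insert _ _))))))))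
  have r9 : a 3 * a 4 * a 5 = 1 := key _ (Set.mem_insert_of_mem _ (Set.mem_insert_of_mem _ (Set.mem_insert_of_mem _ (Set.mem_insert_of_mem _ (Set.mem_insert_of_mem _ (Set.mem_insert_of_mem _ (Set.mem_insert_of_mem _ (Set.mem_insert_of_mem _ (Set.mem_insert _ _)))))))))
  have r10 : a 2 * a 3 * a 6 * a 7 = 1 := key _ (Set.mem_insert_of_mem _ (Set.mem_insert_of_mem _ (Set.mem_insert_of_mem _ (Set.mem_insert_of_mem _ (Set.mem_insert_of_mem _ (Set.mem_insert_of_mem _ (Set.mem_insert_of_mem _ (Set.mem_insert_of_mem _ (Set.mem_insert_of_mem _ rfl)))))))))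
  have e01 : a 0 = a 1 := mul_right_cancel (mul_right_cancel (r1.trans r2.symm : a 0 * a 2 * a 3 = a 1 * a 2 * a 3))
  have e45 : a 4 = a 5 := mul_left_cancel (r3.trans r4.symm)
  have e46 : a 4 = a 6 := mul_left_cancel (r3.trans r5.symm)
  have e47 : a 4 = a 7 := mul_left_cancel (r3.trans r6.symm)
  have e23 : a 2 = a 3 := mul_right_cancel (mul_right_cancel
    ((by rw [mul_assoc, mul_assoc]; exact r8.trans r9.symm) : a 2 * a 4 * a 5 = a 3 * a 4 * a 5))
  have h2 : a 2 * a 4 * a 4 = 1 := by rw [← e45] at r8; exact r8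
  have h22 : a 2 * a 2 * a 4 * a 4 = 1 := by rw [← e23, ← e46, ← e47] at r10; exact r10
  have e2 : a 2 = 1 := by
    calc a 2 = a 2 * (a 2 * a 4 * a 4) := by rw [h2, mul_one]
      _ = a 2 * a 2 * a 4 * a 4 := by group
      _ = 1 := h22
  have e3 : a 3 = 1 := by rw [← e23]; exact e2
  have e0 : a 0 = 1 := by rw [e2, e3, mul_one, mul_one] at r1; exact r1
  have e1 : a 1 = 1 := by rw [← e01]; exact e0
  have e4 : a 4 = 1 := by rw [e0, e1, one_mul, one_mul] at r3; exact r3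
  have e5 : a 5 = 1 := by rw [← e45]; exact e4
  have e6 : a 6 = 1 := by rw [← e46]; exact e4
  have e7 : a 7 = 1 := by rw [← e47]; exact e4
  have all : ∀ i : Fin 8, a i = 1 := by intro i; fin_cases i <;> assumption
  intro x
  obtain ⟨w, rfl⟩ := QuotientGroup.mk'_surjective (Subgroup.normalClosure VRels) x
  induction w using FreeGroup.induction_on with
  | C1 => exact map_one _
  | of i => exact all i
  | inv_of i h => rw [map_inv, h]; exact inv_one
  | mul u v hu hv => rw [map_mul, hu, hv]; exact one_mul 1
end

section
/- The group presented by generators y_1, y_2, y_3, y_4, y_5 with relations y_1y_2y_3 = y_1y_4 = y_1y_5 = y_2y_4 = y_2y_5 = y_3y_4y_5 = 1 is cyclic of order 4, generated by the image of y_1. -/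
open FreeGroup in
/-- Relations for the filling `L` (generators `y_1,…,y_5` are indexed `0,…,4`). -/
def LRels : Set (FreeGroup (Fin 5)) :=
  {of 0 * of 1 * of 2, of 0 * of 3, of 0 * of 4, of 1 * of 3, of 1 * of 4,
   of 2 * of 3 * of 4}

namespace LAux

abbrev P := PresentedGroup LRels

abbrev b (i : Fin 5) : P := PresentedGroup.of i

lemma rel_one {r : FreeGroup (Fin 5)} (hr : r ∈ LRels) :
    (QuotientGroup.mk r : P) = 1 :=
  (QuotientGroup.eq_one_iff r).mpr (Subgroup.subset_normalClosure hr)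

lemma r1 : b 0 * b 1 * b 2 = 1 := by
  exact rel_one (show FreeGroup.of 0 * FreeGroup.of 1 * FreeGroup.of 2 ∈ LRels by
    simp [LRels])

lemma r2 : b 0 * b 3 = 1 := by
  exact rel_one (show FreeGroup.of 0 * FreeGroup.of 3 ∈ LRels by simp [LRels])

lemma r3 : b 0 * b 4 = 1 := by
  exact rel_one (show FreeGroup.of 0 * FreeGroup.of 4 ∈ LRels by simp [LRels])

lemma r4 : b 1 * b 3 = 1 := by
  exact rel_one (show FreeGroup.of 1 * FreeGroup.of 3 ∈ LRels by simp [LRels])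

lemma r6 : b 2 * b 3 * b 4 = 1 := by
  exact rel_one (show FreeGroup.of 2 * FreeGroup.of 3 * FreeGroup.of 4 ∈ LRels by
    simp [LRels])

lemma of3 : b 3 = (b 0)⁻¹ := eq_inv_of_mul_eq_one_right r2

lemma of4 : b 4 = (b 0)⁻¹ := eq_inv_of_mul_eq_one_right r3

lemma of1 : b 1 = b 0 := by
  have h := eq_inv_of_mul_eq_one_left r4
  rw [of3, inv_inv] at h
  exact h

lemma of2 : b 2 = (b 0 * b 0)⁻¹ := by
  have h := r1
  rw [of1] at h
  exact eq_inv_of_mul_eq_one_right h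

lemma a4 : b 0 ^ 4 = 1 := by
  have h := r6
  rw [of2, of3, of4] at h
  have key : b 0 ^ 4 * ((b 0 * b 0)⁻¹ * (b 0)⁻¹ * (b 0)⁻¹) = 1 := by group
  rw [h, mul_one] at key
  exact key

noncomputable section

def vals : Fin 5 → ZMod 4 := ![1, 1, 2, 3, 3]

lemma hrels : ∀ r ∈ LRels, FreeGroup.lift (fun i => Multiplicative.ofAdd (vals i)) r = 1 := by
  intro r hr
  simp only [LRels, Set.mem_insert_iff, Set.mem_singleton_iff] at hr
  rcases hr with rfl | rfl | rfl | rfl | rfl | rfl <;>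
    simp only [map_mul, FreeGroup.lift_apply_of, ← ofAdd_add] <;> decide

def f : P →* Multiplicative (ZMod 4) := PresentedGroup.toGroup hrels

lemma h40 : (4 : ℤ) • Additive.ofMul (b 0) = 0 := by
  have := a4
  rw [show ((4:ℤ) • Additive.ofMul (b 0)) = Additive.ofMul (b 0 ^ (4:ℤ)) from rfl]
  rw [zpow_ofNat, this]; rfl

def g : Multiplicative (ZMod 4) →* P :=
  AddMonoidHom.toMultiplicativeLeft
    (ZMod.lift 4 ⟨zmultiplesHom (Additive P) (Additive.ofMul (b 0)), h40⟩)

lemma g_int (n : ℤ) : g (Multiplicative.ofAdd ((n : ZMod 4))) = b 0 ^ n := by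
  show Additive.toMul
      ((ZMod.lift 4 ⟨zmultiplesHom (Additive P) (Additive.ofMul (b 0)), h40⟩) ((n : ZMod 4))) = _
  rw [ZMod.lift_coe]
  rfl

lemma f_b0 : f (b 0) = Multiplicative.ofAdd (1 : ZMod 4) := by
  simp [f, PresentedGroup.toGroup.of, vals]

lemma f_pow (n : ℤ) : f (b 0 ^ n) = Multiplicative.ofAdd ((n : ZMod 4)) := by
  rw [map_zpow, f_b0]
  rw [← ofAdd_zsmul]
  norm_num

lemma gf : (g.comp f) = MonoidHom.id P := by
  apply PresentedGroup.ext
  intro i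
  have key : ∀ i : Fin 5, f (PresentedGroup.of i) = Multiplicative.ofAdd (vals i) := fun i =>
    PresentedGroup.toGroup.of hrels
  fin_cases i <;>
    rw [MonoidHom.comp_apply, MonoidHom.id_apply, key] <;> simp only [Fin.isValue]
  · rw [show (vals ⟨0, by omega⟩) = ((1:ℤ) : ZMod 4) by decide, g_int]; rfl
  · rw [show (vals ⟨1, by omega⟩) = ((1:ℤ) : ZMod 4) by decide, g_int]
    show _ = b 1
    rw [of1]; group
  · rw [show (vals ⟨2, by omega⟩) = ((-2:ℤ) : ZMod 4) by decide, g_int]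
    show _ = b 2
    rw [of2]; group
  · rw [show (vals ⟨3, by omega⟩) = ((-1:ℤ) : ZMod 4) by decide, g_int]
    show _ = b 3
    rw [of3]; group
  · rw [show (vals ⟨4, by omega⟩) = ((-1:ℤ) : ZMod 4) by decide, g_int]
    show _ = b 4
    rw [of4]; group

lemma fg : (f.comp g) = MonoidHom.id (Multiplicative (ZMod 4)) := by
  refine MonoidHom.ext fun x => ?_
  obtain ⟨n, hn⟩ := ZMod.intCast_surjective (Multiplicative.toAdd x)
  have hx : x = Multiplicative.ofAdd ((n : ZMod 4)) := by rw [hn]; simp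
  rw [hx, MonoidHom.comp_apply, g_int, f_pow, MonoidHom.id_apply]

end

end LAux

/-- The group `⟨y_1,…,y_5 | y_1y_2y_3 = y_1y_4 = y_1y_5 = y_2y_4 = y_2y_5 = y_3y_4y_5 = 1⟩`
is cyclic of order 4, generated by the image of `y_1`. -/
theorem stmt3 :
    ∃ e : PresentedGroup LRels ≃* Multiplicative (ZMod 4),
      e (PresentedGroup.of (0 : Fin 5)) = Multiplicative.ofAdd (1 : ZMod 4) := by
  exact ⟨MonoidHom.toMulEquiv LAux.f LAux.g LAux.gf LAux.fg, LAux.f_b0⟩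
end

section
/- The abelian group presented by generators λ_1, λ_2, λ_3, λ_4, μ_{12}, μ_{13}, μ_{14}, μ_{23}, μ_{24}, μ_{34} with relations μ_{ij} = λ_i + λ_j for all i < j, and μ_{12}+μ_{13}+μ_{14} = μ_{12}+μ_{23}+μ_{24} = μ_{13}+μ_{23}+μ_{34} = μ_{14}+μ_{24}+μ_{34} = 0, is isomorphic to Z/12 ⊕ Z/2 ⊕ Z/2. -/
/-- Standard basis vectors of `ℤ^10`; coordinates `0,…,3` are `λ_1,…,λ_4` and
coordinates `4,…,9` are `μ_{12}, μ_{13}, μ_{14}, μ_{23}, μ_{24}, μ_{34}`. -/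
def bd (i : Fin 10) : Fin 10 → ℤ := Pi.single i 1

/-- The relation submodule: `μ_{ij} = λ_i + λ_j` and the four sums of `μ`'s vanish. -/
def bdRels : Submodule ℤ (Fin 10 → ℤ) :=
  Submodule.span ℤ
    {bd 4 - bd 0 - bd 1, bd 5 - bd 0 - bd 2, bd 6 - bd 0 - bd 3,
     bd 7 - bd 1 - bd 2, bd 8 - bd 1 - bd 3, bd 9 - bd 2 - bd 3,
     bd 4 + bd 5 + bd 6, bd 4 + bd 7 + bd 8, bd 5 + bd 7 + bd 9,
     bd 6 + bd 8 + bd 9}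

def bdGens : Fin 10 → (Fin 10 → ℤ) :=
  ![bd 4 - bd 0 - bd 1, bd 5 - bd 0 - bd 2, bd 6 - bd 0 - bd 3,
    bd 7 - bd 1 - bd 2, bd 8 - bd 1 - bd 3, bd 9 - bd 2 - bd 3,
    bd 4 + bd 5 + bd 6, bd 4 + bd 7 + bd 8, bd 5 + bd 7 + bd 9,
    bd 6 + bd 8 + bd 9]

lemma bdGens_mem (k : Fin 10) : bdGens k ∈ bdRels := by
  fin_cases k <;> exact Submodule.subset_span (by
    simp only [Set.mem_insert_iff, Set.mem_singleton_iff]; decide)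

lemma comb_mem (c : Fin 10 → ℤ) : (∑ k, c k • bdGens k) ∈ bdRels :=
  Submodule.sum_mem _ fun k _ => Submodule.smul_mem _ _ (bdGens_mem k)

lemma mem_of_eq_comb (v : Fin 10 → ℤ) (c : Fin 10 → ℤ)
    (h : v = ∑ k, c k • bdGens k) : v ∈ bdRels := h ▸ comb_mem c

def fa : (Fin 10 → ℤ) →ₗ[ℤ] (ZMod 12 × ZMod 2 × ZMod 2) where
  toFun x :=
    (((x 0 + x 1 + x 2 + 7*x 3 + 2*x 4 + 2*x 5 + 8*x 6 + 2*x 7 + 8*x 8 + 8*x 9 : ℤ) : ZMod 12),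
     ((x 1 + x 3 + x 4 + x 6 + x 7 + x 9 : ℤ) : ZMod 2),
     ((x 2 + x 3 + x 5 + x 6 + x 7 + x 8 : ℤ) : ZMod 2))
  map_add' x y := by
    simp only [Pi.add_apply, Prod.mk_add_mk, Prod.mk.injEq]
    refine ⟨?_, ?_, ?_⟩ <;> push_cast <;> ring
  map_smul' z x := by
    simp only [Pi.smul_apply, smul_eq_mul, RingHom.id_apply, Prod.smul_mk]
    refine congrArg₂ _ ?_ (congrArg₂ _ ?_ ?_) <;>
      simp [zsmul_eq_mul] <;> push_cast <;> ring

lemma hker : bdRels ≤ LinearMap.ker fa := by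
  rw [bdRels, Submodule.span_le]
  intro v hv
  simp only [Set.mem_insert_iff, Set.mem_singleton_iff] at hv
  rcases hv with rfl|rfl|rfl|rfl|rfl|rfl|rfl|rfl|rfl|rfl <;>
    exact LinearMap.mem_ker.mpr (by decide)

noncomputable def fbar : ((Fin 10 → ℤ) ⧸ bdRels) →ₗ[ℤ] (ZMod 12 × ZMod 2 × ZMod 2) :=
  Submodule.liftQ bdRels fa hker

abbrev qk (v : Fin 10 → ℤ) : (Fin 10 → ℤ) ⧸ bdRels := Submodule.Quotient.mk v

lemma twelve_mem : (12 : ℤ) • bd 0 ∈ bdRels :=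
  mem_of_eq_comb _ ![-4,-4,-4,2,2,2,5,-1,-1,-1] (by decide)

lemma two_mem1 : (2 : ℤ) • (bd 1 - bd 0) ∈ bdRels :=
  mem_of_eq_comb _ ![0,1,1,-1,-1,0,-1,1,0,0] (by decide)

lemma two_mem2 : (2 : ℤ) • (bd 2 - bd 0) ∈ bdRels :=
  mem_of_eq_comb _ ![1,0,1,-1,0,-1,-1,0,1,0] (by decide)

noncomputable def g1 : ZMod 12 →+ ((Fin 10 → ℤ) ⧸ bdRels) :=
  ZMod.lift 12 ⟨zmultiplesHom _ (qk (bd 0)), by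
    rw [zmultiplesHom_apply, qk, ← Submodule.Quotient.mk_smul, Submodule.Quotient.mk_eq_zero]
    exact twelve_mem⟩

noncomputable def g2 : ZMod 2 →+ ((Fin 10 → ℤ) ⧸ bdRels) :=
  ZMod.lift 2 ⟨zmultiplesHom _ (qk (bd 1 - bd 0)), by
    rw [zmultiplesHom_apply, qk, ← Submodule.Quotient.mk_smul, Submodule.Quotient.mk_eq_zero]
    exact two_mem1⟩

noncomputable def g3 : ZMod 2 →+ ((Fin 10 → ℤ) ⧸ bdRels) :=
  ZMod.lift 2 ⟨zmultiplesHom _ (qk (bd 2 - bd 0)), by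
    rw [zmultiplesHom_apply, qk, ← Submodule.Quotient.mk_smul, Submodule.Quotient.mk_eq_zero]
    exact two_mem2⟩

noncomputable def g : (ZMod 12 × ZMod 2 × ZMod 2) →+ ((Fin 10 → ℤ) ⧸ bdRels) :=
  g1.comp (AddMonoidHom.fst _ _)
    + g2.comp ((AddMonoidHom.fst _ _).comp (AddMonoidHom.snd _ _))
    + g3.comp ((AddMonoidHom.snd _ _).comp (AddMonoidHom.snd _ _))

lemma g_int (a b c : ℤ) :
    g ((a : ZMod 12), (b : ZMod 2), (c : ZMod 2))
      = qk (a • bd 0 + b • (bd 1 - bd 0) + c • (bd 2 - bd 0)) := by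
  simp only [g, AddMonoidHom.add_apply, AddMonoidHom.coe_comp, Function.comp_apply,
    AddMonoidHom.coe_fst, AddMonoidHom.coe_snd, g1, g2, g3, ZMod.lift_coe,
    zmultiplesHom_apply, qk, ← Submodule.Quotient.mk_smul, ← Submodule.Quotient.mk_add]

lemma fbar_qk (v : Fin 10 → ℤ) : fbar (qk v) = fa v := rfl

lemma key (v : Fin 10 → ℤ) (a b c : ℤ)
    (hfa : fa v = ((a : ZMod 12), (b : ZMod 2), (c : ZMod 2))) (cc : Fin 10 → ℤ)
    (h : a • bd 0 + b • (bd 1 - bd 0) + c • (bd 2 - bd 0) - v = ∑ k, cc k • bdGens k) :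
    g (fa v) = qk v := by
  rw [hfa, g_int, qk, qk, Submodule.Quotient.eq]
  exact mem_of_eq_comb _ cc h

lemma left_inv_bd (i : Fin 10) : g (fbar (qk (bd i))) = qk (bd i) := by
  rw [fbar_qk]
  fin_cases i
  · exact key _ 1 0 0 (by decide) 0 (by decide)
  · exact key _ 1 1 0 (by decide) 0 (by decide)
  · exact key _ 1 0 1 (by decide) 0 (by decide)
  · exact key _ 7 1 1 (by decide) ![-2,-2,-1,0,1,1,2,0,0,-1] (by decide)
  · exact key _ 2 1 0 (by decide) ![-1,0,0,0,0,0,0,0,0,0] (by decide)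
  · exact key _ 2 0 1 (by decide) ![0,-1,0,0,0,0,0,0,0,0] (by decide)
  · exact key _ 8 1 1 (by decide) ![-2,-2,-2,0,1,1,2,0,0,-1] (by decide)
  · exact key _ 2 1 1 (by decide) ![0,0,0,-1,0,0,0,0,0,0] (by decide)
  · exact key _ 8 0 1 (by decide) ![-2,-3,-2,1,1,1,3,-1,0,-1] (by decide)
  · exact key _ 8 1 0 (by decide) ![-3,-2,-2,1,1,1,3,0,-1,-1] (by decide)

/-- The abelian group presented by `λ_1,…,λ_4, μ_{12},…,μ_{34}` with relations
`μ_{ij} = λ_i + λ_j` and `μ_{12}+μ_{13}+μ_{14} = μ_{12}+μ_{23}+μ_{24}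
= μ_{13}+μ_{23}+μ_{34} = μ_{14}+μ_{24}+μ_{34} = 0` is `ℤ/12 ⊕ ℤ/2 ⊕ ℤ/2`. -/
theorem stmt4 :
    Nonempty (((Fin 10 → ℤ) ⧸ bdRels) ≃+ (ZMod 12 × ZMod 2 × ZMod 2)) := by
  have hL : g.toIntLinearMap ∘ₗ fbar ∘ₗ bdRels.mkQ = bdRels.mkQ := by
    apply Module.Basis.ext (Pi.basisFun ℤ (Fin 10))
    intro i
    simpa [bd] using left_inv_bd i
  have h0 : fa (bd 0) = (1, 0, 0) := by decide
  have h1 : fa (bd 1 - bd 0) = (0, 1, 0) := by decide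
  have h2 : fa (bd 2 - bd 0) = (0, 0, 1) := by decide
  refine ⟨{ toFun := fbar
            invFun := g
            map_add' := fbar.map_add
            left_inv := ?_
            right_inv := ?_ }⟩
  · intro q
    obtain ⟨x, rfl⟩ := Submodule.Quotient.mk_surjective _ q
    exact LinearMap.congr_fun hL x
  · rintro ⟨a, b, c⟩
    obtain ⟨a, rfl⟩ := ZMod.intCast_surjective a
    obtain ⟨b, rfl⟩ := ZMod.intCast_surjective b
    obtain ⟨c, rfl⟩ := ZMod.intCast_surjective c
    rw [g_int, fbar_qk, map_add, map_add, map_smul, map_smul, map_smul, h0, h1, h2]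
    simp [Prod.ext_iff, zsmul_eq_mul]
end

section
/- The abelian group presented by generators ψ^{12}, ψ^{13}, ψ^{14}, ψ^{23}, ψ^{24}, ψ^{34} with relations ψ^{12}+ψ^{13}+ψ^{14} = ψ^{12}+ψ^{23}+ψ^{24} = ψ^{13}+ψ^{23}+ψ^{34} = ψ^{14}+ψ^{24}+ψ^{34} = 0 is isomorphic to Z ⊕ Z ⊕ Z/2. -/
/-- Standard basis vectors of `ℤ^6`; the coordinates `0,…,5` correspond to
`ψ^{12}, ψ^{13}, ψ^{14}, ψ^{23}, ψ^{24}, ψ^{34}`. -/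
def psi (i : Fin 6) : Fin 6 → ℤ := Pi.single i 1

/-- The relation submodule for `H²(T_2)`. -/
def psiRels : Submodule ℤ (Fin 6 → ℤ) :=
  Submodule.span ℤ
    {psi 0 + psi 1 + psi 2, psi 0 + psi 3 + psi 4,
     psi 1 + psi 3 + psi 5, psi 2 + psi 4 + psi 5}

def phiH : (Fin 6 → ℤ) →ₗ[ℤ] ℤ × ℤ × ZMod 2 where
  toFun x := (x 0 - x 2 - x 3 + x 5, x 1 - x 2 - x 3 + x 4, ((x 3 + x 4 + x 5 : ℤ) : ZMod 2))
  map_add' x y := by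
    refine Prod.ext ?_ (Prod.ext ?_ ?_) <;> simp [Pi.add_apply] <;> push_cast <;> ring
  map_smul' c x := by
    refine Prod.ext ?_ (Prod.ext ?_ ?_) <;>
      simp [Pi.smul_apply, smul_eq_mul, zsmul_eq_mul] <;> push_cast <;> ring

lemma mem1 : psi 0 + psi 1 + psi 2 ∈ psiRels := Submodule.subset_span (by simp)
lemma mem2 : psi 0 + psi 3 + psi 4 ∈ psiRels := Submodule.subset_span (by simp)
lemma mem3 : psi 1 + psi 3 + psi 5 ∈ psiRels := Submodule.subset_span (by simp)
lemma mem4 : psi 2 + psi 4 + psi 5 ∈ psiRels := Submodule.subset_span (by simp)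

lemma rels_le_ker : psiRels ≤ LinearMap.ker phiH := by
  rw [psiRels, Submodule.span_le]
  rintro v (rfl | rfl | rfl | rfl) <;>
    · simp only [SetLike.mem_coe, LinearMap.mem_ker, phiH, psi, LinearMap.coe_mk,
        AddHom.coe_mk, Pi.add_apply]
      refine Prod.ext ?_ (Prod.ext ?_ ?_) <;> simp [Pi.single_apply] <;> decide

/-- torsion element -/
def tH : Fin 6 → ℤ := psi 0 + psi 1 + psi 3

lemma two_t_mem : (2 : ℤ) • tH ∈ psiRels := by
  have h : (2 : ℤ) • tH =
      ((psi 0 + psi 1 + psi 2) + (psi 0 + psi 3 + psi 4) + (psi 1 + psi 3 + psi 5))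
        - (psi 2 + psi 4 + psi 5) := by
    funext i; fin_cases i <;> simp [tH, psi, Pi.single_apply] <;> ring
  rw [h]
  exact sub_mem (add_mem (add_mem mem1 mem2) mem3) mem4

noncomputable def zhomH : ZMod 2 →+ ((Fin 6 → ℤ) ⧸ psiRels) :=
  ZMod.lift 2 ⟨(AddMonoidHom.comp (psiRels.mkQ).toAddMonoidHom (zmultiplesHom _ tH)), by
    simpa [Submodule.Quotient.mk_eq_zero] using two_t_mem⟩

lemma zhomH_int (n : ℤ) : zhomH (n : ZMod 2) = Submodule.Quotient.mk (n • tH) := by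
  rw [zhomH, ZMod.lift_coe]
  rfl

noncomputable def gH : ℤ × ℤ × ZMod 2 → ((Fin 6 → ℤ) ⧸ psiRels) :=
  fun p => Submodule.Quotient.mk (p.1 • psi 0 + p.2.1 • psi 1) + zhomH p.2.2

/-- The abelian group presented by `ψ^{12},…,ψ^{34}` with the four sum relations
is isomorphic to `ℤ ⊕ ℤ ⊕ ℤ/2`. -/
theorem stmt5 :
    Nonempty (((Fin 6 → ℤ) ⧸ psiRels) ≃+ (ℤ × ℤ × ZMod 2)) := by
  refine ⟨{ toFun := psiRels.liftQ phiH rels_le_ker, invFun := gH,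
            left_inv := ?_, right_inv := ?_,
            map_add' := map_add _ }⟩
  · intro q
    obtain ⟨x, rfl⟩ := Submodule.Quotient.mk_surjective _ q
    rw [Submodule.liftQ_apply]
    show gH (phiH x) = _
    simp only [gH, phiH, LinearMap.coe_mk, AddHom.coe_mk]
    rw [zhomH_int, ← Submodule.Quotient.mk_add, Submodule.Quotient.eq]
    have h : ((x 0 - x 2 - x 3 + x 5) • psi 0 + (x 1 - x 2 - x 3 + x 4) • psi 1
          + (x 3 + x 4 + x 5) • tH) - x
        = (x 4 + x 5 - x 2) • (psi 0 + psi 1 + psi 2) + (x 5) • (psi 0 + psi 3 + psi 4)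
          + (x 4) • (psi 1 + psi 3 + psi 5) + (-(x 4) - x 5) • (psi 2 + psi 4 + psi 5) := by
      funext i; fin_cases i <;> simp [tH, psi, Pi.single_apply] <;> ring
    rw [h]
    exact add_mem (add_mem (add_mem (Submodule.smul_mem _ _ mem1) (Submodule.smul_mem _ _ mem2))
      (Submodule.smul_mem _ _ mem3)) (Submodule.smul_mem _ _ mem4)
  · rintro ⟨a, b, c⟩
    obtain ⟨n, rfl⟩ := ZMod.intCast_surjective c
    show psiRels.liftQ phiH rels_le_ker (gH (a, b, (n : ZMod 2))) = _
    simp only [gH, zhomH_int, ← Submodule.Quotient.mk_add, Submodule.liftQ_apply]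
    simp only [phiH, LinearMap.coe_mk, AddHom.coe_mk, Pi.add_apply, Pi.smul_apply,
      smul_eq_mul, tH, psi, Pi.single_apply]
    refine Prod.ext ?_ (Prod.ext ?_ ?_) <;> simp <;> push_cast <;> ring
end

section
/- Let x_1, ..., x_{10} be an orthogonal basis of a bilinear form module over Z with x_i·x_i = −1 for all i. Setting α = −2x_1−2x_2+x_3+x_4−3x_7+x_8+x_9+3x_{10} and β = −3x_3−3x_4+3x_5+3x_6−x_7+2x_8+2x_9−2x_{10}, one has α·α = −30, α·β = 5, β·β = −49, and the matrix [[−30, 5], [5, −49]] is negative definite. -/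
lemma posdef_aux : (-(!![-30, 5; 5, -49] : Matrix (Fin 2) (Fin 2) ℝ)).PosDef := by
  refine Matrix.PosDef.of_dotProduct_mulVec_pos ?_ ?_
  · ext i j
    fin_cases i <;> fin_cases j <;> rfl
  · intro v hv
    have : v 0 ≠ 0 ∨ v 1 ≠ 0 := by
      by_contra hc
      push_neg at hc
      exact hv (by ext i; fin_cases i <;> simp [hc.1, hc.2])
    have e : dotProduct (star v) ((-(!![-30, 5; 5, -49] : Matrix (Fin 2) (Fin 2) ℝ)).mulVec v)
        = 30 * v 0 ^ 2 - 10 * v 0 * v 1 + 49 * v 1 ^ 2 := by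
      simp [Matrix.mulVec, dotProduct, Fin.sum_univ_two, Matrix.neg_apply]
      ring
    rw [e]
    rcases this with h2 | h2 <;>
      nlinarith [sq_nonneg (v 0 - v 1), mul_self_pos.mpr h2, sq_nonneg (v 0), sq_nonneg (v 1)]
/-- If `x_1,…,x_{10}` are orthogonal of square `-1` with respect to a bilinear form `B`,
then `α = -2x_1-2x_2+x_3+x_4-3x_7+x_8+x_9+3x_{10}` and
`β = -3x_3-3x_4+3x_5+3x_6-x_7+2x_8+2x_9-2x_{10}` satisfy `α·α = -30`, `α·β = 5`,
`β·β = -49`, and the matrix `[[-30,5],[5,-49]]` is negative definite. -/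
theorem stmt10 {M : Type*} [AddCommGroup M] [Module ℤ M]
    (B : M →ₗ[ℤ] M →ₗ[ℤ] ℤ) (x : Fin 10 → M)
    (hB : ∀ i j, B (x i) (x j) = if i = j then -1 else 0) :
    B (-2 • x 0 - 2 • x 1 + x 2 + x 3 - 3 • x 6 + x 7 + x 8 + 3 • x 9)
      (-2 • x 0 - 2 • x 1 + x 2 + x 3 - 3 • x 6 + x 7 + x 8 + 3 • x 9) = -30 ∧
    B (-2 • x 0 - 2 • x 1 + x 2 + x 3 - 3 • x 6 + x 7 + x 8 + 3 • x 9)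
      (-3 • x 2 - 3 • x 3 + 3 • x 4 + 3 • x 5 - x 6 + 2 • x 7 + 2 • x 8 - 2 • x 9) = 5 ∧
    B (-3 • x 2 - 3 • x 3 + 3 • x 4 + 3 • x 5 - x 6 + 2 • x 7 + 2 • x 8 - 2 • x 9)
      (-3 • x 2 - 3 • x 3 + 3 • x 4 + 3 • x 5 - x 6 + 2 • x 7 + 2 • x 8 - 2 • x 9) = -49 ∧
    (-(!![-30, 5; 5, -49] : Matrix (Fin 2) (Fin 2) ℝ)).PosDef := by
  refine ⟨?_, ?_, ?_, posdef_aux⟩ <;>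
    simp [map_add, map_sub, map_neg, map_smul, hB]
end

section
/- In Z^{12} with basis h, e_1, ..., e_{11} and the bilinear form given by h·h = 1, e_i·e_i = −1, and all distinct basis vectors orthogonal, the vector V = 86h − 36e_1 − 25e_2 − 25e_3 − 25e_4 − 25e_5 − 25e_6 − 25e_7 − 19e_8 − 31e_9 − 20e_{10} − 20e_{11} satisfies: (1) V·u_i = 0 for i = 0,...,4 where u_0 = 2f + e_1 − 2e_{10} − 2e_{11} with f = 3h − (e_1 + ... + e_9), u_1 = h − e_1 − e_2 − e_3, u_2 = h − e_1 − e_4 − e_5, u_3 = h − e_1 − e_6 − e_7, u_4 = h − e_1 − e_8 − e_9; (2) V·V > 0; (3) V·h > 0; (4) V·K > 0 where K = −3h + e_1 + ... + e_{11}. -/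
/-- The standard intersection form of `ℂP² # 11 (-ℂP²)` on `ℤ^{12}` with basis
`h = coordinate 0`, `e_i = coordinate i`: `h·h = 1`, `e_i·e_i = -1`, distinct basis
vectors orthogonal. -/
def Q12 (v w : Fin 12 → ℤ) : ℤ := 2 * (v 0 * w 0) - ∑ i, v i * w i

def h12 : Fin 12 → ℤ := Pi.single 0 1
def e12 (i : Fin 12) : Fin 12 → ℤ := Pi.single i 1

noncomputable def f12 : Fin 12 → ℤ :=
  (3 : ℤ) • h12 - (e12 1 + e12 2 + e12 3 + e12 4 + e12 5 + e12 6 + e12 7 + e12 8 + e12 9)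

noncomputable def V12 : Fin 12 → ℤ :=
  (86 : ℤ) • h12 - 36 • e12 1 - 25 • e12 2 - 25 • e12 3 - 25 • e12 4 - 25 • e12 5
    - 25 • e12 6 - 25 • e12 7 - 19 • e12 8 - 31 • e12 9 - 20 • e12 10 - 20 • e12 11

noncomputable def u0' : Fin 12 → ℤ := (2 : ℤ) • f12 + e12 1 - 2 • e12 10 - 2 • e12 11
noncomputable def u1' : Fin 12 → ℤ := h12 - e12 1 - e12 2 - e12 3
noncomputable def u2' : Fin 12 → ℤ := h12 - e12 1 - e12 4 - e12 5
noncomputable def u3' : Fin 12 → ℤ := h12 - e12 1 - e12 6 - e12 7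
noncomputable def u4' : Fin 12 → ℤ := h12 - e12 1 - e12 8 - e12 9

noncomputable def K12 : Fin 12 → ℤ :=
  (-3 : ℤ) • h12 + (e12 1 + e12 2 + e12 3 + e12 4 + e12 5 + e12 6 + e12 7 + e12 8
    + e12 9 + e12 10 + e12 11)

lemma V12_eq : V12 = ![86,-36,-25,-25,-25,-25,-25,-25,-19,-31,-20,-20] := by
  funext i; fin_cases i <;> rfl

lemma u0'_eq : u0' = ![6,-1,-2,-2,-2,-2,-2,-2,-2,-2,-2,-2] := by
  funext i; fin_cases i <;> rfl

lemma u1'_eq : u1' = ![1,-1,-1,-1,0,0,0,0,0,0,0,0] := by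
  funext i; fin_cases i <;> rfl

lemma u2'_eq : u2' = ![1,-1,0,0,-1,-1,0,0,0,0,0,0] := by
  funext i; fin_cases i <;> rfl

lemma u3'_eq : u3' = ![1,-1,0,0,0,0,-1,-1,0,0,0,0] := by
  funext i; fin_cases i <;> rfl

lemma u4'_eq : u4' = ![1,-1,0,0,0,0,0,0,-1,-1,0,0] := by
  funext i; fin_cases i <;> rfl

lemma h12_eq : h12 = ![1,0,0,0,0,0,0,0,0,0,0,0] := by
  funext i; fin_cases i <;> rfl

lemma K12_eq : K12 = ![-3,1,1,1,1,1,1,1,1,1,1,1] := by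
  funext i; fin_cases i <;> rfl

/-- Lemma 5.3: `V` is orthogonal to the spheres `u_0,…,u_4` of the configuration `S_2`,
has positive square, and pairs positively with `h` and with the canonical class `K`. -/
theorem stmt12 :
    Q12 V12 u0' = 0 ∧ Q12 V12 u1' = 0 ∧ Q12 V12 u2' = 0 ∧ Q12 V12 u3' = 0 ∧
    Q12 V12 u4' = 0 ∧ 0 < Q12 V12 V12 ∧ 0 < Q12 V12 h12 ∧ 0 < Q12 V12 K12 := by
  rw [V12_eq, u0'_eq, u1'_eq, u2'_eq, u3'_eq, u4'_eq, h12_eq, K12_eq]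
  refine ⟨?_, ?_, ?_, ?_, ?_, ?_, ?_, ?_⟩ <;> norm_num [Q12, Fin.sum_univ_succ]
end
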